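/- arXiv:0801.3099 — 6 statements merged into one kernel-verified Lean document; each statement's English description precedes it below -/
import Mathlib

section
/- Let B be an n×n Hermitian positive definite complex matrix, γ ∈ (0,1), and T an n×n Hermitian matrix with ‖I − T‖ ≤ γ (operator norm). Let x ≠ 0 and let x' be defined by μ(x)·x' = Bx − (I − T)(Bx − μ(x)x). Then ‖μ(x)x' − Bx‖ ≤ γ‖Bx − μ(x)x‖, the vector x' is nonzero, and sin∠{x', Bx} ≤ γ‖Bx − μ(x)x‖/‖Bx‖ < 1; that is, x' lies in the circular cone around Bx with opening angle φ_γ(x) = arcsin(γ‖Bx − μ(x)x‖/‖Bx‖). -/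
open scoped ComplexOrder

noncomputable section

/-- Matrix-vector multiplication viewed as a map on `EuclideanSpace`. -/
def mulVecE {n : ℕ} (M : Matrix (Fin n) (Fin n) ℂ) (x : EuclideanSpace ℂ (Fin n)) :
    EuclideanSpace ℂ (Fin n) :=
  (WithLp.equiv 2 (Fin n → ℂ)).symm (M.mulVec (WithLp.equiv 2 (Fin n → ℂ) x))

/-- The Rayleigh quotient `μ(x) = (x,Bx)/(x,x)`. -/
def RQ {n : ℕ} (B : Matrix (Fin n) (Fin n) ℂ) (x : EuclideanSpace ℂ (Fin n)) : ℝ :=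
  (inner ℂ x (mulVecE B x) : ℂ).re / ‖x‖ ^ 2

/-- The angle in `[0, π/2]` between two vectors, defined by
`cos ∠{x,y} = |(x,y)| / (‖x‖‖y‖)`. -/
def ang {n : ℕ} (x y : EuclideanSpace ℂ (Fin n)) : ℝ :=
  Real.arccos (‖(inner ℂ x y : ℂ)‖ / (‖x‖ * ‖y‖))

/-- The opening angle `φ_γ(x) = arcsin(γ ‖Bx - μ(x)x‖ / ‖Bx‖)`. -/
def oangle {n : ℕ} (B : Matrix (Fin n) (Fin n) ℂ) (γ : ℝ)
    (x : EuclideanSpace ℂ (Fin n)) : ℝ :=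
  Real.arcsin (γ * ‖mulVecE B x - ((RQ B x : ℝ) : ℂ) • x‖ / ‖mulVecE B x‖)

lemma key_ineq {n : ℕ} (y b : EuclideanSpace ℂ (Fin n)) :
    ‖b‖ ^ 2 * ‖y‖ ^ 2 - ‖(inner ℂ y b : ℂ)‖ ^ 2 ≤ ‖y‖ ^ 2 * ‖y - b‖ ^ 2 := by
  have e : ‖y - b‖ ^ 2 = ‖y‖ ^ 2 - 2 * (inner ℂ y b : ℂ).re + ‖b‖ ^ 2 :=
    @norm_sub_sq ℂ _ _ _ _ y b
  have hre : |(inner ℂ y b : ℂ).re| ≤ ‖(inner ℂ y b : ℂ)‖ := Complex.abs_re_le_norm _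
  have h2 : ((inner ℂ y b : ℂ).re) ^ 2 ≤ ‖(inner ℂ y b : ℂ)‖ ^ 2 := by
    nlinarith [abs_nonneg (inner ℂ y b : ℂ).re, sq_abs (inner ℂ y b : ℂ).re,
      norm_nonneg (inner ℂ y b : ℂ)]
  nlinarith [sq_nonneg ((inner ℂ y b : ℂ).re - ‖y‖ ^ 2)]

lemma pyth {n : ℕ} (b x : EuclideanSpace ℂ (Fin n)) (μ : ℝ)
    (h : (inner ℂ x b : ℂ).re = μ * ‖x‖ ^ 2) :
    ‖b‖ ^ 2 = ‖b - ((μ : ℝ) : ℂ) • x‖ ^ 2 + μ ^ 2 * ‖x‖ ^ 2 := by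
  have e := @norm_sub_sq ℂ _ _ _ _ b (((μ : ℝ) : ℂ) • x)
  have h1 : RCLike.re (inner ℂ b (((μ : ℝ) : ℂ) • x) : ℂ) = μ ^ 2 * ‖x‖ ^ 2 := by
    rw [inner_smul_right]
    have h2 : (inner ℂ b x : ℂ) = starRingEnd ℂ (inner ℂ x b) := (inner_conj_symm b x).symm
    rw [h2]
    simp only [RCLike.re_to_complex, Complex.mul_re, Complex.ofReal_re, Complex.ofReal_im,
      Complex.conj_re, Complex.conj_im, h]
    ring
  have h3 : ‖((μ : ℝ) : ℂ) • x‖ ^ 2 = μ ^ 2 * ‖x‖ ^ 2 := by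
    rw [norm_smul, Complex.norm_real, Real.norm_eq_abs, mul_pow, sq_abs]
  rw [e, h1, h3]; ring

lemma bounds (rn bn m xn γ : ℝ) (hp : bn ^ 2 = rn ^ 2 + m ^ 2 * xn ^ 2)
    (hm : 0 < m) (hx : 0 < xn) (hrn : 0 ≤ rn) (hbn : 0 ≤ bn)
    (hγ0 : 0 < γ) (hγ1 : γ < 1) : 0 < bn ∧ γ * rn < bn := by
  have hmx : 0 < m ^ 2 * xn ^ 2 := by positivity
  have hb : 0 < bn := by nlinarith
  have hrblt : rn < bn := by nlinarith
  refine ⟨hb, ?_⟩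
  nlinarith [mul_nonneg hγ0.le hrn]

lemma cone_main {n : ℕ} (b x' : EuclideanSpace ℂ (Fin n)) (μ δ : ℝ)
    (hμ : 0 < μ) (hb : 0 < ‖b‖) (hδ0 : 0 ≤ δ) (hδ : δ < ‖b‖)
    (h1 : ‖((μ : ℝ) : ℂ) • x' - b‖ ≤ δ) :
    x' ≠ 0 ∧ Real.sin (ang x' b) ≤ δ / ‖b‖ ∧ δ / ‖b‖ < 1 ∧
      ang x' b ≤ Real.arcsin (δ / ‖b‖) := by
  have h2 : x' ≠ 0 := by
    intro h; rw [h, smul_zero, zero_sub, norm_neg] at h1; linarith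
  set y := ((μ : ℝ) : ℂ) • x' with hy
  have hμn : ‖((μ : ℝ) : ℂ)‖ = μ := by
    rw [Complex.norm_real, Real.norm_eq_abs, abs_of_pos hμ]
  have hynorm : ‖y‖ = μ * ‖x'‖ := by rw [hy, norm_smul, hμn]
  have hx'pos : (0:ℝ) < ‖x'‖ := norm_pos_iff.mpr h2
  have hypos : (0:ℝ) < ‖y‖ := by rw [hynorm]; positivity
  have hq : ‖(inner ℂ x' b : ℂ)‖ / (‖x'‖ * ‖b‖) = ‖(inner ℂ y b : ℂ)‖ / (‖y‖ * ‖b‖) := by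
    rw [hy, inner_smul_left, norm_mul, RCLike.norm_conj, hμn, norm_smul, hμn, mul_assoc,
      mul_div_mul_left _ _ (ne_of_gt hμ)]
  set c := ‖(inner ℂ x' b : ℂ)‖ / (‖x'‖ * ‖b‖) with hc
  have hc0 : 0 ≤ c := by rw [hc]; positivity
  have hkey := key_ineq y b
  have hc2 : c ^ 2 * (‖y‖ ^ 2 * ‖b‖ ^ 2) = ‖(inner ℂ y b : ℂ)‖ ^ 2 := by
    rw [hq, div_pow, mul_pow]
    field_simp
  have h1c : 1 - c ^ 2 ≤ (δ / ‖b‖) ^ 2 := by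
    have hd2 : ‖y - b‖ ^ 2 ≤ δ ^ 2 := by nlinarith [norm_nonneg (y - b)]
    have hrw : (δ / ‖b‖) ^ 2 * ‖b‖ ^ 2 = δ ^ 2 := by field_simp
    nlinarith [mul_pos (mul_pos hypos hypos) (mul_pos hb hb), sq_nonneg ‖y‖,
      mul_le_mul_of_nonneg_left hd2 (sq_nonneg ‖y‖)]
  have hsin : Real.sin (ang x' b) = Real.sqrt (1 - c ^ 2) := by
    unfold ang; rw [← hc, Real.sin_arccos]
  have h3 : Real.sin (ang x' b) ≤ δ / ‖b‖ := by
    rw [hsin]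
    calc Real.sqrt (1 - c ^ 2) ≤ Real.sqrt ((δ / ‖b‖) ^ 2) := Real.sqrt_le_sqrt h1c
      _ = δ / ‖b‖ := Real.sqrt_sq (by positivity)
  have h4 : δ / ‖b‖ < 1 := (div_lt_one hb).mpr hδ
  have h5 : ang x' b ≤ Real.arcsin (δ / ‖b‖) := by
    have hnn : 0 ≤ ang x' b := Real.arccos_nonneg _
    have hle : ang x' b ≤ Real.pi / 2 := by
      unfold ang
      exact Real.arccos_le_pi_div_two.mpr (by positivity)
    have harc := Real.arcsin_sin (by linarith [Real.pi_pos]) hle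
    rw [← harc]
    exact Real.monotone_arcsin h3
  exact ⟨h2, h3, h4, h5⟩

/-- The preconditioned iterate `x'` lies in the circular cone around `Bx` with
opening angle `φ_γ(x)`. -/
theorem iterate_in_cone
    {n : ℕ} (B T : Matrix (Fin n) (Fin n) ℂ)
    (hB : B.PosDef) (hT : T.IsHermitian)
    (γ : ℝ) (hγ0 : 0 < γ) (hγ1 : γ < 1)
    (hTnorm : ∀ z : EuclideanSpace ℂ (Fin n), ‖mulVecE (1 - T) z‖ ≤ γ * ‖z‖)
    (x : EuclideanSpace ℂ (Fin n)) (hx : x ≠ 0)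
    (x' : EuclideanSpace ℂ (Fin n))
    (hx' : ((RQ B x : ℝ) : ℂ) • x' =
      mulVecE B x - mulVecE (1 - T) (mulVecE B x - ((RQ B x : ℝ) : ℂ) • x)) :
    ‖((RQ B x : ℝ) : ℂ) • x' - mulVecE B x‖ ≤
        γ * ‖mulVecE B x - ((RQ B x : ℝ) : ℂ) • x‖ ∧
    x' ≠ 0 ∧
    Real.sin (ang x' (mulVecE B x)) ≤
        γ * ‖mulVecE B x - ((RQ B x : ℝ) : ℂ) • x‖ / ‖mulVecE B x‖ ∧
    γ * ‖mulVecE B x - ((RQ B x : ℝ) : ℂ) • x‖ / ‖mulVecE B x‖ < 1 ∧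
    ang x' (mulVecE B x) ≤ oangle B γ x := by
  have hxnorm : (0:ℝ) < ‖x‖ := norm_pos_iff.mpr hx
  have hxne : ‖x‖ ≠ 0 := ne_of_gt hxnorm
  have hμpos : 0 < RQ B x := by
    have hxf : (WithLp.equiv 2 (Fin n → ℂ)) x ≠ 0 := fun h =>
      hx ((WithLp.equiv 2 (Fin n → ℂ)).injective (by simpa using h))
    have hpos := hB.re_dotProduct_pos hxf
    have h2 : (inner ℂ x (mulVecE B x) : ℂ).re
        = RCLike.re (dotProduct (star ((WithLp.equiv 2 (Fin n → ℂ)) x))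
          (B.mulVec ((WithLp.equiv 2 (Fin n → ℂ)) x))) := by
      rw [EuclideanSpace.inner_eq_star_dotProduct]
      simp [mulVecE, dotProduct_comm]
    unfold RQ
    exact div_pos (by rw [h2]; exact_mod_cast hpos) (pow_pos hxnorm 2)
  have hre : (inner ℂ x (mulVecE B x) : ℂ).re = RQ B x * ‖x‖ ^ 2 := by
    rw [RQ]; field_simp
  have hpyth := pyth (mulVecE B x) x (RQ B x) hre
  obtain ⟨hb0, hδb⟩ := bounds ‖mulVecE B x - ((RQ B x : ℝ) : ℂ) • x‖ ‖mulVecE B x‖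
    (RQ B x) ‖x‖ γ hpyth hμpos hxnorm (norm_nonneg _) (norm_nonneg _) hγ0 hγ1
  have h1 : ‖((RQ B x : ℝ) : ℂ) • x' - mulVecE B x‖ ≤
      γ * ‖mulVecE B x - ((RQ B x : ℝ) : ℂ) • x‖ := by
    rw [hx']
    have e : mulVecE B x - mulVecE (1 - T) (mulVecE B x - ((RQ B x : ℝ) : ℂ) • x)
        - mulVecE B x = -(mulVecE (1 - T) (mulVecE B x - ((RQ B x : ℝ) : ℂ) • x)) := by
      abel
    rw [e, norm_neg]
    exact hTnorm _
  obtain ⟨h2, h3, h4, h5⟩ := cone_main (mulVecE B x) x' (RQ B x)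
    (γ * ‖mulVecE B x - ((RQ B x : ℝ) : ℂ) • x‖) hμpos hb0 (by positivity) hδb h1
  exact ⟨h1, h2, h3, h4, by unfold oangle; exact h5⟩
end
end

section
/- Let B be an n×n Hermitian positive definite complex matrix and let x, w be nonzero vectors. If cos∠{w, Bx} > cos∠{x, Bx} (i.e., the angle between w and Bx is strictly smaller than the angle between x and Bx), then μ(w) > μ(x). -/
open scoped ComplexOrder

noncomputable section

set_option maxHeartbeats 1000000 in
/-- If the angle between `w` and `Bx` is strictly smaller than the angle between `x`
and `Bx` (equivalently, the cosines compare strictly), then `μ(w) > μ(x)`. -/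
theorem rayleigh_increases_with_smaller_angle
    {n : ℕ} (B : Matrix (Fin n) (Fin n) ℂ) (hB : B.PosDef)
    (x w : EuclideanSpace ℂ (Fin n)) (hx : x ≠ 0) (hw : w ≠ 0)
    (hcos : ‖(inner ℂ x (mulVecE B x) : ℂ)‖ / (‖x‖ * ‖mulVecE B x‖) <
            ‖(inner ℂ w (mulVecE B x) : ℂ)‖ / (‖w‖ * ‖mulVecE B x‖)) :
    RQ B x < RQ B w := by
  classical
  set x' : Fin n → ℂ := WithLp.equiv 2 (Fin n → ℂ) x with hx'def
  set w' : Fin n → ℂ := WithLp.equiv 2 (Fin n → ℂ) w with hw'def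
  have hx' : x' ≠ 0 := by
    intro h
    exact hx ((WithLp.equiv 2 (Fin n → ℂ)).injective (by simpa [hx'def] using h))
  have hw' : w' ≠ 0 := by
    intro h
    exact hw ((WithLp.equiv 2 (Fin n → ℂ)).injective (by simpa [hw'def] using h))
  -- the three B-inner products
  have hix : (inner ℂ x (mulVecE B x) : ℂ) = dotProduct (star x') (B.mulVec x') := 
    (EuclideanSpace.inner_eq_star_dotProduct _ _).trans (dotProduct_comm _ _)
  have hiw : (inner ℂ w (mulVecE B w) : ℂ) = dotProduct (star w') (B.mulVec w') := 
    (EuclideanSpace.inner_eq_star_dotProduct _ _).trans (dotProduct_comm _ _)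
  have hiwx : (inner ℂ w (mulVecE B x) : ℂ) = dotProduct (star w') (B.mulVec x') := 
    (EuclideanSpace.inner_eq_star_dotProduct _ _).trans (dotProduct_comm _ _)
  set A : ℝ := (dotProduct (star x') (B.mulVec x')).re with hAdef
  set C : ℝ := (dotProduct (star w') (B.mulVec w')).re with hCdef
  set t : ℝ := ‖dotProduct (star w') (B.mulVec x')‖ with htdef
  have hA : 0 < A := hB.re_dotProduct_pos hx'
  have hC : 0 < C := hB.re_dotProduct_pos hw'
  -- Cauchy–Schwarz for the B-inner product, via a `PreInnerProductSpace.Core`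
  letI c : PreInnerProductSpace.Core ℂ (Fin n → ℂ) :=
    { inner := fun a b => dotProduct (star a) (B.mulVec b)
      conj_inner_symm := fun a b => by
        rw [Matrix.star_dotProduct, starRingEnd_apply, star_star, Matrix.star_mulVec,
          Matrix.dotProduct_mulVec, hB.isHermitian.eq]
      re_inner_nonneg := fun a => by
        by_cases h : a = 0
        · simp [h]
        · exact le_of_lt (hB.re_dotProduct_pos h)
      add_left := by simp only [star_add, add_dotProduct, forall_const, implies_true]
      smul_left := fun a b r => by
        rw [← smul_eq_mul, ← smul_dotProduct, starRingEnd_apply, ← star_smul] }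
  have CS : ‖dotProduct (star w') (B.mulVec x')‖ *
        ‖dotProduct (star x') (B.mulVec w')‖ ≤
      RCLike.re (dotProduct (star w') (B.mulVec w')) *
        RCLike.re (dotProduct (star x') (B.mulVec x')) :=
    InnerProductSpace.Core.inner_mul_inner_self_le (c := c) w' x'
  have hstar : star (dotProduct (star w') (B.mulVec x'))
      = dotProduct (star x') (B.mulVec w') := by
    rw [Matrix.star_dotProduct, star_star, Matrix.star_mulVec, Matrix.dotProduct_mulVec,
      hB.isHermitian.eq]
  have hsymm : ‖dotProduct (star x') (B.mulVec w')‖ =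
      ‖dotProduct (star w') (B.mulVec x')‖ := by
    rw [← hstar, norm_star]
  have CS' : t * t ≤ C * A := by
    rw [hsymm] at CS
    simpa [← htdef, ← hAdef, ← hCdef] using CS
  -- norms are positive
  have hxn : (0:ℝ) < ‖x‖ := norm_pos_iff.mpr hx
  have hwn : (0:ℝ) < ‖w‖ := norm_pos_iff.mpr hw
  have hyn : (0:ℝ) < ‖mulVecE B x‖ := by
    rw [norm_pos_iff]
    intro h
    have hBx : B.mulVec x' = 0 := by
      have := congrArg (WithLp.equiv 2 (Fin n → ℂ)) h
      simpa [mulVecE, hx'def] using this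
    have hA' : (0:ℝ) < (dotProduct (star x') (B.mulVec x')).re := hA
    rw [hBx] at hA'
    simp at hA'
  -- A ≤ ‖inner x (Bx)‖
  have hAle : A ≤ ‖(inner ℂ x (mulVecE B x) : ℂ)‖ := by
    rw [hix]
    calc A ≤ |(dotProduct (star x') (B.mulVec x')).re| := le_abs_self _
    _ ≤ ‖dotProduct (star x') (B.mulVec x')‖ := Complex.abs_re_le_norm _
  -- from hcos : A * ‖w‖ < t * ‖x‖
  have hwt : ‖(inner ℂ w (mulVecE B x) : ℂ)‖ = t := by rw [hiwx]
  have h1 : A / (‖x‖ * ‖mulVecE B x‖) < t / (‖w‖ * ‖mulVecE B x‖) := by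
    calc A / (‖x‖ * ‖mulVecE B x‖)
        ≤ ‖(inner ℂ x (mulVecE B x) : ℂ)‖ / (‖x‖ * ‖mulVecE B x‖) := by gcongr
      _ < t / (‖w‖ * ‖mulVecE B x‖) := hwt ▸ hcos
  rw [div_lt_div_iff₀ (by positivity) (by positivity)] at h1
  have key : A * ‖w‖ < t * ‖x‖ := by
    have h2 : A * ‖w‖ * ‖mulVecE B x‖ < t * ‖x‖ * ‖mulVecE B x‖ := by
      ring_nf at h1 ⊢; linarith
    exact lt_of_mul_lt_mul_right h2 (le_of_lt hyn)
  -- conclude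
  have hRQx : RQ B x = A / ‖x‖ ^ 2 := by rw [RQ, hix]
  have hRQw : RQ B w = C / ‖w‖ ^ 2 := by rw [RQ, hiw]
  rw [hRQx, hRQw, div_lt_div_iff₀ (by positivity) (by positivity)]
  have ht0 : 0 ≤ t := norm_nonneg _
  nlinarith [mul_pos hA hwn, mul_pos hxn hwn, sq_nonneg (t * ‖x‖ - A * ‖w‖)]
end
end

section
/- (Temple's inequality with equality characterization.) Let B be an n×n Hermitian complex matrix and let μ_i > μ_{i+1} be two eigenvalues of B such that no eigenvalue of B lies in the open interval (μ_{i+1}, μ_i). Then for every nonzero x, writing κ = μ(x), one has ‖Bx − κx‖²/‖x‖² ≥ (μ_i − κ)(κ − μ_{i+1}); equivalently, the operator inequality (B − μ_i I)(B − μ_{i+1} I) ≥ 0 holds. Moreover, if μ_{i+1} < κ < μ_i, equality is attained if and only if x lies in the sum of the eigenspaces of B for the eigenvalues μ_i and μ_{i+1}. -/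
noncomputable section

def IsEig {n : ℕ} (B : Matrix (Fin n) (Fin n) ℂ) (μ : ℝ) : Prop :=
  ∃ v : Fin n → ℂ, v ≠ 0 ∧ B.mulVec v = (μ : ℂ) • v

namespace TempleAux

variable {n : ℕ}

lemma mulVecE_eq (M : Matrix (Fin n) (Fin n) ℂ) (x : EuclideanSpace ℂ (Fin n)) :
    mulVecE M x = Matrix.toEuclideanLin M x := rfl

lemma mulVecE_eigen (B : Matrix (Fin n) (Fin n) ℂ) (hB : B.IsHermitian) (j : Fin n) :
    mulVecE B (hB.eigenvectorBasis j)
      = ((hB.eigenvalues j : ℂ)) • hB.eigenvectorBasis j := by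
  have h := hB.mulVec_eigenvectorBasis j
  show (WithLp.equiv 2 (Fin n → ℂ)).symm _ = _
  apply (WithLp.equiv 2 (Fin n → ℂ)).injective
  simp only [Equiv.apply_symm_apply]
  rw [show (WithLp.equiv 2 (Fin n → ℂ)) (hB.eigenvectorBasis j) = ⇑(hB.eigenvectorBasis j) from rfl, h]
  funext k
  simp [Complex.real_smul]

lemma repr_mulVecE (B : Matrix (Fin n) (Fin n) ℂ) (hB : B.IsHermitian)
    (y : EuclideanSpace ℂ (Fin n)) (j : Fin n) :
    hB.eigenvectorBasis.repr (mulVecE B y) j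
      = (hB.eigenvalues j : ℂ) * hB.eigenvectorBasis.repr y j := by
  have hsym := (Matrix.isHermitian_iff_isSymmetric.1 hB)
  rw [OrthonormalBasis.repr_apply_apply, OrthonormalBasis.repr_apply_apply, mulVecE_eq,
    ← hsym (hB.eigenvectorBasis j) y, ← mulVecE_eq, mulVecE_eigen B hB j]
  rw [inner_smul_left]
  simp

lemma norm_sq_repr (b : OrthonormalBasis (Fin n) ℂ (EuclideanSpace ℂ (Fin n)))
    (y : EuclideanSpace ℂ (Fin n)) :
    ‖y‖ ^ 2 = ∑ j, Complex.normSq (b.repr y j) := by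
  rw [← b.repr.norm_map y, ← sq_abs, EuclideanSpace.norm_eq]
  rw [abs_of_nonneg (Real.sqrt_nonneg _), Real.sq_sqrt (by positivity)]
  congr 1; funext j; rw [Complex.sq_norm]

lemma inner_repr (b : OrthonormalBasis (Fin n) ℂ (EuclideanSpace ℂ (Fin n)))
    (y z : EuclideanSpace ℂ (Fin n)) :
    (inner ℂ y z : ℂ) = ∑ j, (starRingEnd ℂ) (b.repr y j) * b.repr z j := by
  rw [← b.repr.inner_map_map y z]
  rw [PiLp.inner_apply]; refine Finset.sum_congr rfl fun j _ => ?_; rw [RCLike.inner_apply]; ring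

lemma toEuclideanLin_one_apply (y : EuclideanSpace ℂ (Fin n)) :
    Matrix.toEuclideanLin (1 : Matrix (Fin n) (Fin n) ℂ) y = y := by
  apply (WithLp.equiv 2 (Fin n → ℂ)).injective
  simp [Matrix.toLin'_one]

lemma mulVecE_shift (B : Matrix (Fin n) (Fin n) ℂ) (μ : ℝ) (y : EuclideanSpace ℂ (Fin n)) :
    mulVecE (B - ((μ : ℝ) : ℂ) • 1) y = mulVecE B y - ((μ : ℝ) : ℂ) • y := by
  rw [mulVecE_eq, map_sub, map_smul]
  simp only [LinearMap.sub_apply, LinearMap.smul_apply]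
  rw [← mulVecE_eq, toEuclideanLin_one_apply]

lemma mulVecE_mul (M N : Matrix (Fin n) (Fin n) ℂ) (y : EuclideanSpace ℂ (Fin n)) :
    mulVecE (M * N) y = mulVecE M (mulVecE N y) := by
  simp only [mulVecE, Equiv.apply_symm_apply, Matrix.mulVec_mulVec]

end TempleAux

open TempleAux in
/-- Temple's inequality `‖Bx - κx‖²/‖x‖² ≥ (μ_i - κ)(κ - μ_{i+1})` (with `κ = μ(x)`), the
equivalent operator inequality `(B - μ_i I)(B - μ_{i+1} I) ≥ 0`, and the characterization
of equality: for `μ_{i+1} < κ < μ_i`, equality holds iff `x` lies in the sum of the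
eigenspaces of `μ_i` and `μ_{i+1}`. -/
theorem temple_inequality_with_equality
    {n : ℕ} (B : Matrix (Fin n) (Fin n) ℂ) (hB : B.IsHermitian)
    (μi μi1 : ℝ) (hμ : μi1 < μi)
    (heigi : IsEig B μi) (heigi1 : IsEig B μi1)
    (hgap : ∀ μ : ℝ, IsEig B μ → μ ∉ Set.Ioo μi1 μi) :
    (∀ x : EuclideanSpace ℂ (Fin n), x ≠ 0 →
      (μi - RQ B x) * (RQ B x - μi1) ≤
        ‖mulVecE B x - ((RQ B x : ℝ) : ℂ) • x‖ ^ 2 / ‖x‖ ^ 2) ∧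
    (∀ z : EuclideanSpace ℂ (Fin n),
      0 ≤ (inner ℂ z (mulVecE ((B - ((μi : ℝ) : ℂ) • 1) * (B - ((μi1 : ℝ) : ℂ) • 1)) z) : ℂ).re) ∧
    (∀ x : EuclideanSpace ℂ (Fin n), x ≠ 0 → μi1 < RQ B x → RQ B x < μi →
      (‖mulVecE B x - ((RQ B x : ℝ) : ℂ) • x‖ ^ 2 / ‖x‖ ^ 2 =
          (μi - RQ B x) * (RQ B x - μi1) ↔
        ∃ u v : EuclideanSpace ℂ (Fin n),
          mulVecE B u = ((μi : ℝ) : ℂ) • u ∧ mulVecE B v = ((μi1 : ℝ) : ℂ) • v ∧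
          x = u + v)) := by
  classical
  set b := hB.eigenvectorBasis with hb
  set lam := hB.eigenvalues with hlam
  -- each lam j is an eigenvalue
  have hiseig : ∀ j, IsEig B (lam j) := by
    intro j
    refine ⟨⇑(b j), ?_, ?_⟩
    · intro h
      have hbj : (b j : EuclideanSpace ℂ (Fin n)) ≠ 0 := b.toBasis.ne_zero j
      exact hbj (by ext k; simpa using congrFun h k)
    · rw [hB.mulVec_eigenvectorBasis j]
      funext k
      simp [Complex.real_smul, hb, hlam]
  have hprod : ∀ j, 0 ≤ (lam j - μi) * (lam j - μi1) := by
    intro j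
    have := hgap (lam j) (hiseig j)
    simp only [Set.mem_Ioo, not_and, not_lt] at this
    rcases lt_or_ge μi1 (lam j) with h1 | h1
    · have := this h1
      nlinarith
    · nlinarith
  have hprodpos : ∀ j, lam j ≠ μi → lam j ≠ μi1 → 0 < (lam j - μi) * (lam j - μi1) := by
    intro j h1 h2
    rcases (hprod j).lt_or_eq with h | h
    · exact h
    · exfalso
      rcases mul_eq_zero.mp h.symm with h' | h'
      · exact h1 (by linarith [sub_eq_zero.mp h'])
      · exact h2 (by linarith [sub_eq_zero.mp h'])
  -- coefficient and weight functions
  set c : EuclideanSpace ℂ (Fin n) → Fin n → ℂ := fun y j => b.repr y j with hc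
  set w : EuclideanSpace ℂ (Fin n) → Fin n → ℝ := fun y j => Complex.normSq (c y j) with hw
  have hw0 : ∀ y j, 0 ≤ w y j := fun y j => Complex.normSq_nonneg _
  have hN : ∀ y, ‖y‖ ^ 2 = ∑ j, w y j := fun y => norm_sq_repr b y
  -- numerator of Rayleigh quotient
  have hRQnum : ∀ y, (inner ℂ y (mulVecE B y) : ℂ).re = ∑ j, lam j * w y j := by
    intro y
    rw [inner_repr b, Complex.re_sum]
    refine Finset.sum_congr rfl fun j _ => ?_
    rw [repr_mulVecE B hB]
    have : (starRingEnd ℂ) (c y j) * ((lam j : ℂ) * c y j)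
        = ((lam j * w y j : ℝ) : ℂ) := by
      rw [hw]
      push_cast
      rw [Complex.normSq_eq_conj_mul_self]
      ring
    rw [show hB.eigenvectorBasis.repr y j = c y j from rfl, this, Complex.ofReal_re]
  -- norm of residual
  have hres : ∀ y (κ : ℝ), ‖mulVecE B y - ((κ : ℝ) : ℂ) • y‖ ^ 2
      = ∑ j, (lam j - κ) ^ 2 * w y j := by
    intro y κ
    rw [norm_sq_repr b]
    refine Finset.sum_congr rfl fun j _ => ?_
    have : b.repr (mulVecE B y - ((κ : ℝ) : ℂ) • y) j = ((lam j : ℂ) - κ) * c y j := by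
      rw [map_sub, map_smul]
      simp only [PiLp.sub_apply, PiLp.smul_apply, smul_eq_mul]
      rw [repr_mulVecE B hB]
      ring
    rw [this, Complex.normSq_mul]
    have : Complex.normSq ((lam j : ℂ) - κ) = (lam j - κ) ^ 2 := by
      rw [← Complex.ofReal_sub, Complex.normSq_ofReal]; ring
    rw [this]
  -- the sum of lam * w equals RQ * N
  have hNpos : ∀ y : EuclideanSpace ℂ (Fin n), y ≠ 0 → 0 < ‖y‖ ^ 2 := by
    intro y hy; exact pow_pos (norm_pos_iff.mpr hy) 2
  have hsum_lam : ∀ y : EuclideanSpace ℂ (Fin n), y ≠ 0 →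
      ∑ j, lam j * w y j = RQ B y * ∑ j, w y j := by
    intro y hy
    have h3 := hNpos y hy
    have h4 : (∑ j, w y j) ≠ 0 := by rw [← hN y]; exact ne_of_gt h3
    rw [RQ, hRQnum y, hN y, div_mul_cancel₀ _ h4]
  -- key identity
  have key : ∀ y : EuclideanSpace ℂ (Fin n), y ≠ 0 →
      ∑ j, (lam j - RQ B y) ^ 2 * w y j
        = (μi - RQ B y) * (RQ B y - μi1) * (∑ j, w y j)
          + ∑ j, (lam j - μi) * (lam j - μi1) * w y j := by
    intro y hy
    set κ := RQ B y
    have hzero : ∑ j, (lam j - κ) * w y j = 0 := by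
      simp only [sub_mul]
      rw [Finset.sum_sub_distrib, hsum_lam y hy, ← Finset.mul_sum]
      ring
    have hptwise : ∀ j, (lam j - κ) ^ 2 * w y j
        = (μi - κ) * (κ - μi1) * w y j + (lam j - μi) * (lam j - μi1) * w y j
          + (μi + μi1 - 2 * κ) * ((lam j - κ) * w y j) := fun j => by ring
    rw [Finset.sum_congr rfl fun j _ => hptwise j]
    rw [Finset.sum_add_distrib, Finset.sum_add_distrib, ← Finset.mul_sum, ← Finset.mul_sum, hzero]
    ring
  have hSnonneg : ∀ y, 0 ≤ ∑ j, (lam j - μi) * (lam j - μi1) * w y j := by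
    intro y
    exact Finset.sum_nonneg fun j _ => mul_nonneg (hprod j) (hw0 y j)
  refine ⟨?_, ?_, ?_⟩
  · -- Part 1
    intro x hx
    have h3 := hNpos x hx
    rw [hres x (RQ B x), key x hx, ← hN x]
    rw [le_div_iff₀ h3]
    nlinarith [hSnonneg x]
  · -- Part 2
    intro z
    have hrepr : ∀ j, b.repr (mulVecE ((B - ((μi : ℝ) : ℂ) • 1) * (B - ((μi1 : ℝ) : ℂ) • 1)) z) j
        = ((lam j : ℂ) - μi) * ((lam j : ℂ) - μi1) * c z j := by
      intro j
      rw [mulVecE_mul, mulVecE_shift, map_sub, map_smul]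
      simp only [PiLp.sub_apply, PiLp.smul_apply, smul_eq_mul]
      rw [repr_mulVecE B hB, mulVecE_shift, map_sub, map_smul]
      simp only [PiLp.sub_apply, PiLp.smul_apply, smul_eq_mul]
      rw [repr_mulVecE B hB]
      ring
    rw [inner_repr b, Complex.re_sum]
    apply Finset.sum_nonneg
    intro j _
    rw [hrepr j]
    have : (starRingEnd ℂ) (b.repr z j) * (((lam j : ℂ) - μi) * ((lam j : ℂ) - μi1) * c z j)
        = (((lam j - μi) * (lam j - μi1) * w z j : ℝ) : ℂ) := by
      rw [hw]
      push_cast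
      rw [Complex.normSq_eq_conj_mul_self]
      ring
    rw [show b.repr z j = c z j from rfl] at this ⊢
    rw [this, Complex.ofReal_re]
    exact mul_nonneg (hprod j) (hw0 z j)
  · -- Part 3
    intro x hx hlo hhi
    have h3 := hNpos x hx
    have heq : (‖mulVecE B x - ((RQ B x : ℝ) : ℂ) • x‖ ^ 2 / ‖x‖ ^ 2
          = (μi - RQ B x) * (RQ B x - μi1))
        ↔ (∑ j, (lam j - μi) * (lam j - μi1) * w x j) = 0 := by
      rw [hres x (RQ B x), key x hx, ← hN x, div_eq_iff (ne_of_gt h3)]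
      constructor
      · intro h; linarith
      · intro h; rw [h]; ring
    rw [heq]
    constructor
    · -- S = 0 → decomposition
      intro hS0
      have hterm : ∀ j ∈ Finset.univ, (lam j - μi) * (lam j - μi1) * w x j = 0 := by
        rw [← Finset.sum_eq_zero_iff_of_nonneg
          (fun j _ => mul_nonneg (hprod j) (hw0 x j))]
        exact hS0
      have hcz : ∀ j, lam j ≠ μi → lam j ≠ μi1 → c x j = 0 := by
        intro j h1 h2
        have := hterm j (Finset.mem_univ j)
        have hp := hprodpos j h1 h2
        have : w x j = 0 := by
          by_contra hne
          exact hne (by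
            rcases mul_eq_zero.mp this with h | h
            · exact absurd h (ne_of_gt hp)
            · exact h)
        exact Complex.normSq_eq_zero.mp this
      set cu : EuclideanSpace ℂ (Fin n) :=
        WithLp.toLp 2 (fun j => if lam j = μi then c x j else 0 : Fin n → ℂ) with hcu
      set cv : EuclideanSpace ℂ (Fin n) :=
        WithLp.toLp 2 (fun j => if lam j = μi1 then c x j else 0 : Fin n → ℂ) with hcv
      refine ⟨b.repr.symm cu, b.repr.symm cv, ?_, ?_, ?_⟩
      · apply b.repr.injective
        ext j
        rw [repr_mulVecE B hB, map_smul]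
        simp only [PiLp.smul_apply, smul_eq_mul, LinearIsometryEquiv.apply_symm_apply]
        rw [← hb, LinearIsometryEquiv.apply_symm_apply]
        show (lam j : ℂ) * cu j = (μi : ℂ) * cu j
        by_cases h : lam j = μi
        · simp [hcu, h]
        · simp [hcu, h]
      · apply b.repr.injective
        ext j
        rw [repr_mulVecE B hB, map_smul]
        simp only [PiLp.smul_apply, smul_eq_mul, LinearIsometryEquiv.apply_symm_apply]
        rw [← hb, LinearIsometryEquiv.apply_symm_apply]
        show (lam j : ℂ) * cv j = (μi1 : ℂ) * cv j
        by_cases h : lam j = μi1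
        · simp [hcv, h]
        · simp [hcv, h]
      · apply b.repr.injective
        rw [map_add, LinearIsometryEquiv.apply_symm_apply, LinearIsometryEquiv.apply_symm_apply]
        ext j
        show c x j = cu j + cv j
        by_cases h1 : lam j = μi
        · have h2 : lam j ≠ μi1 := by rw [h1]; exact ne_of_gt hμ
          simp [hcu, hcv, h1, h2, hμ.ne, hμ.ne']
        · by_cases h2 : lam j = μi1
          · simp [hcu, hcv, h1, h2, hμ.ne, hμ.ne']
          · simp [hcu, hcv, h1, h2, hcz j h1 h2]
    · -- decomposition → S = 0
      rintro ⟨u, v, hu, hv, hxuv⟩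
      apply Finset.sum_eq_zero
      intro j _
      by_cases h1 : lam j = μi
      · rw [h1]; ring
      by_cases h2 : lam j = μi1
      · rw [h2]; ring
      have hu0 : b.repr u j = 0 := by
        have := congrArg (fun y => b.repr y j) hu
        simp only [repr_mulVecE B hB, map_smul, PiLp.smul_apply, smul_eq_mul] at this
        rw [repr_mulVecE B hB] at this
        have hfac : ((lam j : ℂ) - μi) * b.repr u j = 0 := by
          rw [sub_mul, this]; ring
        rcases mul_eq_zero.mp hfac with h | h
        · exact absurd (by exact_mod_cast sub_eq_zero.mp h) h1
        · exact h
      have hv0 : b.repr v j = 0 := by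
        have := congrArg (fun y => b.repr y j) hv
        simp only [repr_mulVecE B hB, map_smul, PiLp.smul_apply, smul_eq_mul] at this
        rw [repr_mulVecE B hB] at this
        have hfac : ((lam j : ℂ) - μi1) * b.repr v j = 0 := by
          rw [sub_mul, this]; ring
        rcases mul_eq_zero.mp hfac with h | h
        · exact absurd (by exact_mod_cast sub_eq_zero.mp h) h2
        · exact h
      have hc0 : c x j = 0 := by
        rw [hc]
        simp only [hxuv, map_add, PiLp.add_apply, hu0, hv0, add_zero]
      rw [hw]
      simp [hc0]
end
end

section
/- (Integration of inverse functions.) Let b > 0 and let f, g : [0, b] → ℝ be differentiable, strictly increasing functions with strictly positive derivatives, and let a ∈ [0, b] satisfy f(a) = g(b). Suppose that for all α, β ∈ [0, b] with f(α) = g(β) the derivatives satisfy f'(α) ≤ g'(β). Then for every ξ ∈ [0, a] one has f(a − ξ) ≥ g(b − ξ). -/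
lemma exists_cont_inverse {p q : ℝ} (hpq : p ≤ q) {f : ℝ → ℝ}
    (hc : ContinuousOn f (Set.Icc p q)) (hm : StrictMonoOn f (Set.Icc p q)) :
    ∃ F : ℝ → ℝ, Continuous F ∧
      (∀ y ∈ Set.Icc (f p) (f q), F y ∈ Set.Icc p q ∧ f (F y) = y) ∧
      (∀ s ∈ Set.Icc p q, F (f s) = s) := by
  have hp : p ∈ Set.Icc p q := Set.left_mem_Icc.2 hpq
  have hq : q ∈ Set.Icc p q := Set.right_mem_Icc.2 hpq
  have hfpq : f p ≤ f q := hm.monotoneOn hp hq hpq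
  have hmapsTo : Set.MapsTo f (Set.Icc p q) (Set.Icc (f p) (f q)) := fun x hx =>
    ⟨hm.monotoneOn hp hx hx.1, hm.monotoneOn hx hq hx.2⟩
  have hsurj : Set.SurjOn f (Set.Icc p q) (Set.Icc (f p) (f q)) :=
    intermediate_value_Icc hpq hc
  have hbij : Function.Bijective (hmapsTo.restrict f _ _) := by
    constructor
    · intro x y hxy
      ext
      exact hm.injOn x.2 y.2 (congrArg Subtype.val hxy)
    · rintro ⟨y, hy⟩
      obtain ⟨x, hx, hfx⟩ := hsurj hy
      exact ⟨⟨x, hx⟩, Subtype.ext hfx⟩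
  have hce : Continuous (hmapsTo.restrict f _ _) := hc.mapsToRestrict hmapsTo
  let e : Set.Icc p q ≃ Set.Icc (f p) (f q) := Equiv.ofBijective _ hbij
  have hce' : Continuous e := hce
  let h : Set.Icc p q ≃ₜ Set.Icc (f p) (f q) := Continuous.homeoOfEquivCompactToT2 hce'
  have happ : ∀ x : Set.Icc p q, (h x : ℝ) = f x := fun x => rfl
  refine ⟨fun y => (h.symm (Set.projIcc (f p) (f q) hfpq y) : ℝ), ?_, ?_, ?_⟩
  · exact continuous_subtype_val.comp (h.symm.continuous.comp (continuous_projIcc))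
  · intro y hy
    simp only [Set.projIcc_of_mem hfpq hy]
    refine ⟨(h.symm ⟨y, hy⟩).2, ?_⟩
    have := congrArg Subtype.val (h.apply_symm_apply ⟨y, hy⟩)
    rw [happ] at this
    exact this
  · intro s hs
    have hfs : f s ∈ Set.Icc (f p) (f q) := hmapsTo hs
    simp only [Set.projIcc_of_mem hfpq hfs]
    have : h ⟨s, hs⟩ = ⟨f s, hfs⟩ := Subtype.ext rfl
    rw [← this, h.symm_apply_apply]

/-- Integration of inverse functions (Theorem A.1): if `f, g` are strictly increasing
with positive derivatives on `[0,b]`, `f(a) = g(b)`, and `f'(α) ≤ g'(β)` whenever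
`f(α) = g(β)`, then `f(a - ξ) ≥ g(b - ξ)` for all `ξ ∈ [0,a]`. -/
theorem integration_of_inverse_functions
    (b : ℝ) (hb : 0 < b) (f g f' g' : ℝ → ℝ)
    (hf : ∀ t ∈ Set.Icc (0 : ℝ) b, HasDerivWithinAt f (f' t) (Set.Icc (0 : ℝ) b) t)
    (hg : ∀ t ∈ Set.Icc (0 : ℝ) b, HasDerivWithinAt g (g' t) (Set.Icc (0 : ℝ) b) t)
    (hfmono : StrictMonoOn f (Set.Icc (0 : ℝ) b))
    (hgmono : StrictMonoOn g (Set.Icc (0 : ℝ) b))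
    (hf' : ∀ t ∈ Set.Icc (0 : ℝ) b, 0 < f' t)
    (hg' : ∀ t ∈ Set.Icc (0 : ℝ) b, 0 < g' t)
    (a : ℝ) (ha : a ∈ Set.Icc (0 : ℝ) b) (hab : f a = g b)
    (hcomp : ∀ α ∈ Set.Icc (0 : ℝ) b, ∀ β ∈ Set.Icc (0 : ℝ) b,
      f α = g β → f' α ≤ g' β) :
    ∀ ξ ∈ Set.Icc (0 : ℝ) a, g (b - ξ) ≤ f (a - ξ) := by
  obtain ⟨ha0, haU⟩ := ha
  have hb0 : (0:ℝ) ≤ b := hb.le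
  have h0b : (0:ℝ) ∈ Set.Icc (0:ℝ) b := ⟨le_refl _, hb0⟩
  have hbb : b ∈ Set.Icc (0:ℝ) b := ⟨hb0, le_refl _⟩
  have hamem : a ∈ Set.Icc (0:ℝ) b := ⟨ha0, haU⟩
  have hsub : Set.Icc (0:ℝ) a ⊆ Set.Icc (0:ℝ) b := Set.Icc_subset_Icc le_rfl haU
  have hfc : ContinuousOn f (Set.Icc 0 b) := fun t ht => (hf t ht).continuousWithinAt
  have hgc : ContinuousOn g (Set.Icc 0 b) := fun t ht => (hg t ht).continuousWithinAt
  obtain ⟨F, hFc, hFinv, hFleft⟩ := exists_cont_inverse hb0 hfc hfmono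
  obtain ⟨G, hGc, hGinv, hGleft⟩ := exists_cont_inverse hb0 hgc hgmono
  -- Key lemma: if f α = g β with α ≤ a, then b - β ≤ a - α.
  have L : ∀ α ∈ Set.Icc (0:ℝ) a, ∀ β ∈ Set.Icc (0:ℝ) b, f α = g β → b - β ≤ a - α := by
    intro α hα β hβ hαβ
    have hαb : α ∈ Set.Icc (0:ℝ) b := hsub hα
    rcases eq_or_lt_of_le hα.2 with heq | hlt
    · have hgg : g β = g b := by rw [← hαβ, heq, hab]
      have hβb : β = b := hgmono.injOn hβ hbb hgg
      simp [heq, hβb]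
    · have hflt : f α < f a := hfmono hαb hamem hlt
      set D := fun y => F y - G y with hD
      have hderiv : ∀ y ∈ Set.Ioo (f α) (f a), ∃ d, 0 ≤ d ∧ HasDerivAt D d y := by
        intro y hy
        have hyf : y ∈ Set.Icc (f 0) (f b) :=
          ⟨(hfmono.monotoneOn h0b hαb hα.1).trans hy.1.le,
           hy.2.le.trans (hfmono.monotoneOn hamem hbb haU)⟩
        have hyg : y ∈ Set.Icc (g 0) (g b) := by
          constructor
          · exact ((hgmono.monotoneOn h0b hβ hβ.1).trans_lt (hαβ ▸ hy.1)).le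
          · rw [← hab]; exact hy.2.le
        obtain ⟨hFy_mem, hfFy⟩ := hFinv y hyf
        obtain ⟨hGy_mem, hgGy⟩ := hGinv y hyg
        have hFy_gt : α < F y := by
          rcases lt_or_ge α (F y) with h | h
          · exact h
          · exfalso
            have := hfmono.monotoneOn hFy_mem hαb h
            rw [hfFy] at this
            exact absurd hy.1 (not_lt.2 this)
        have hFy_lt : F y < a := by
          rcases lt_or_ge (F y) a with h | h
          · exact h
          · exfalso
            have := hfmono.monotoneOn hamem hFy_mem h
            rw [hfFy] at this
            exact absurd hy.2 (not_lt.2 this)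
        have hGy_gt : β < G y := by
          rcases lt_or_ge β (G y) with h | h
          · exact h
          · exfalso
            have := hgmono.monotoneOn hGy_mem hβ h
            rw [hgGy, ← hαβ] at this
            exact absurd hy.1 (not_lt.2 this)
        have hGy_lt : G y < b := by
          rcases lt_or_ge (G y) b with h | h
          · exact h
          · exfalso
            have := hgmono.monotoneOn hbb hGy_mem h
            rw [hgGy, ← hab] at this
            exact absurd hy.2 (not_lt.2 this)
        have hfd : HasDerivAt f (f' (F y)) (F y) :=
          (hf (F y) hFy_mem).hasDerivAt (Icc_mem_nhds (hα.1.trans_lt hFy_gt) (hFy_lt.trans_le haU))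
        have hgd : HasDerivAt g (g' (G y)) (G y) :=
          (hg (G y) hGy_mem).hasDerivAt (Icc_mem_nhds (hβ.1.trans_lt hGy_gt) hGy_lt)
        have hFd : HasDerivAt F (f' (F y))⁻¹ y := by
          apply HasDerivAt.of_local_left_inverse hFc.continuousAt hfd
            (ne_of_gt (hf' _ hFy_mem))
          have h1 : f 0 < y := (hfmono.monotoneOn h0b hαb hα.1).trans_lt hy.1
          have h2 : y < f b := hy.2.trans_le (hfmono.monotoneOn hamem hbb haU)
          filter_upwards [Ioo_mem_nhds h1 h2] with z hz
          exact (hFinv z (Set.Ioo_subset_Icc_self hz)).2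
        have hGd : HasDerivAt G (g' (G y))⁻¹ y := by
          apply HasDerivAt.of_local_left_inverse hGc.continuousAt hgd
            (ne_of_gt (hg' _ hGy_mem))
          have h1 : g 0 < y := (hgmono.monotoneOn h0b hβ hβ.1).trans_lt (hαβ ▸ hy.1)
          have h2 : y < g b := hab ▸ hy.2
          filter_upwards [Ioo_mem_nhds h1 h2] with z hz
          exact (hGinv z (Set.Ioo_subset_Icc_self hz)).2
        refine ⟨(f' (F y))⁻¹ - (g' (G y))⁻¹, ?_, hFd.sub hGd⟩
        have hle : f' (F y) ≤ g' (G y) :=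
          hcomp (F y) hFy_mem (G y) hGy_mem (by rw [hfFy, hgGy])
        have := inv_anti₀ (hf' _ hFy_mem) hle
        linarith
      have hmono : MonotoneOn D (Set.Icc (f α) (f a)) := by
        apply monotoneOn_of_deriv_nonneg (convex_Icc _ _) ((hFc.sub hGc).continuousOn)
        · intro y hy
          rw [interior_Icc] at hy
          obtain ⟨d, _, hd⟩ := hderiv y hy
          exact hd.differentiableAt.differentiableWithinAt
        · intro y hy
          rw [interior_Icc] at hy
          obtain ⟨d, hd0, hd⟩ := hderiv y hy
          rw [show F - G = D from rfl, hd.deriv]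
          exact hd0
      have h2 : D (f α) ≤ D (f a) :=
        hmono (Set.left_mem_Icc.2 hflt.le) (Set.right_mem_Icc.2 hflt.le) hflt.le
      have e1 : F (f α) = α := hFleft α hαb
      have e2 : G (f α) = β := by rw [hαβ]; exact hGleft β hβ
      have e3 : F (f a) = a := hFleft a hamem
      have e4 : G (f a) = b := by rw [hab]; exact hGleft b hbb
      simp only [hD, e1, e2, e3, e4] at h2
      linarith
  -- Step 2: the conclusion holds wherever f (a - ξ) ≥ g 0.
  have step2 : ∀ ξ ∈ Set.Icc (0:ℝ) a, g 0 ≤ f (a - ξ) → g (b - ξ) ≤ f (a - ξ) := by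
    intro ξ hξ hge
    have hαm : a - ξ ∈ Set.Icc (0:ℝ) a := ⟨sub_nonneg.2 hξ.2, by linarith [hξ.1]⟩
    have hy : f (a - ξ) ∈ Set.Icc (g 0) (g b) :=
      ⟨hge, by rw [← hab]; exact hfmono.monotoneOn (hsub hαm) hamem hαm.2⟩
    obtain ⟨β, hβ, hgβ⟩ := intermediate_value_Icc hb0 hgc hy
    have hL := L (a - ξ) hαm β hβ hgβ.symm
    have hbξ : b - ξ ∈ Set.Icc (0:ℝ) b := ⟨by linarith [hξ.2], by linarith [hξ.1]⟩
    calc g (b - ξ) ≤ g β := hgmono.monotoneOn hbξ hβ (by linarith)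
    _ = f (a - ξ) := hgβ
  -- Step 3: continuation argument.
  intro ξ hξ
  by_contra hcon
  push_neg at hcon
  set B := {η : ℝ | η ∈ Set.Icc (0:ℝ) a ∧ f (a - η) < g (b - η)} with hB
  have hξB : ξ ∈ B := ⟨hξ, hcon⟩
  have hBne : B.Nonempty := ⟨ξ, hξB⟩
  have hBbdd : BddBelow B := ⟨0, fun η hη => hη.1.1⟩
  set c := sInf B with hc
  have hc_lb : ∀ η ∈ B, c ≤ η := fun η hη => csInf_le hBbdd hη
  have hc0 : 0 ≤ c := le_csInf hBne (fun η hη => hη.1.1)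
  have hca : c ≤ a := le_trans (hc_lb ξ hξB) hξ.2
  have hcmem : c ∈ Set.Icc (0:ℝ) a := ⟨hc0, hca⟩
  have good : ∀ η ∈ Set.Icc (0:ℝ) a, η < c → g (b - η) ≤ f (a - η) := by
    intro η hη hlt
    by_contra hcon2
    push_neg at hcon2
    exact absurd (hc_lb η ⟨hη, hcon2⟩) (not_le.2 hlt)
  have hmapIcc : ∀ η ∈ Set.Icc (0:ℝ) a, a - η ∈ Set.Icc (0:ℝ) b :=
    fun η hη => ⟨by linarith [hη.2], by linarith [hη.1]⟩
  have hmapIcc' : ∀ η ∈ Set.Icc (0:ℝ) a, b - η ∈ Set.Icc (0:ℝ) b :=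
    fun η hη => ⟨by linarith [hη.2], by linarith [hη.1]⟩
  have hφc : ContinuousOn (fun η => f (a - η) - g (b - η)) (Set.Icc (0:ℝ) a) := by
    apply ContinuousOn.sub
    · exact hfc.comp ((continuous_const.sub continuous_id).continuousOn) hmapIcc
    · exact hgc.comp ((continuous_const.sub continuous_id).continuousOn) hmapIcc'
  have hc_ge : g (b - c) ≤ f (a - c) := by
    rcases eq_or_lt_of_le hc0 with h0 | h0
    · simp only [← h0, sub_zero]
      exact le_of_eq hab.symm
    · have hcw : ContinuousWithinAt (fun η => f (a - η) - g (b - η)) (Set.Ico 0 c) c :=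
        (hφc c hcmem).mono (fun η hη => ⟨hη.1, hη.2.le.trans hca⟩)
      haveI hne : (nhdsWithin c (Set.Ico (0:ℝ) c)).NeBot := by
        rw [← mem_closure_iff_nhdsWithin_neBot, closure_Ico h0.ne]
        exact Set.right_mem_Icc.2 hc0
      have hkey : (0:ℝ) ≤ f (a - c) - g (b - c) := by
        apply ge_of_tendsto hcw
        apply Filter.eventually_of_mem self_mem_nhdsWithin
        intro η hη
        have hηm : η ∈ Set.Icc (0:ℝ) a := ⟨hη.1, hη.2.le.trans hca⟩
        linarith [good η hηm hη.2]
      linarith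
  have hcab : c < a := by
    rcases eq_or_lt_of_le hca with h | h
    · exfalso
      obtain ⟨η, hη⟩ := hBne
      have hηa : η = a := le_antisymm hη.1.2 (h ▸ hc_lb η hη)
      rw [hηa, ← h] at hη
      exact absurd hc_ge (not_le.2 hη.2)
    · exact h
  have hbc : 0 < b - c := by linarith
  have hflt2 : g 0 < f (a - c) :=
    lt_of_lt_of_le (hgmono h0b ⟨hbc.le, by linarith⟩ hbc) hc_ge
  have hψ : ContinuousWithinAt (fun η => f (a - η)) (Set.Icc (0:ℝ) a) c :=
    (hfc.comp ((continuous_const.sub continuous_id).continuousOn) hmapIcc) c hcmem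
  have hev : {η : ℝ | g 0 < f (a - η)} ∈ nhdsWithin c (Set.Icc (0:ℝ) a) :=
    hψ (Ioi_mem_nhds hflt2)
  rw [Metric.mem_nhdsWithin_iff] at hev
  obtain ⟨ε, hε, hball⟩ := hev
  obtain ⟨η, hηB, hηlt⟩ := exists_lt_of_csInf_lt hBne (lt_add_of_pos_right c hε)
  have hηball : η ∈ Metric.ball c ε := by
    rw [Metric.mem_ball, Real.dist_eq, abs_lt]
    constructor
    · linarith [hc_lb η hηB]
    · linarith
  have hηgt : g 0 < f (a - η) := hball ⟨hηball, hηB.1⟩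
  exact absurd (step2 η hηB.1 hηgt.le) (not_le.2 hηB.2)
end

section
/- Let B be an n×n Hermitian positive definite complex matrix and let x_i, x_{i+1} be orthonormal eigenvectors of B with eigenvalues μ_i > μ_{i+1} > 0. Let x = c_i x_i + c_{i+1} x_{i+1} with c_i ≠ 0 and c_{i+1} ≠ 0, let α > 0, and set w = (B + αI)⁻¹ B x. Then μ_{i+1} < μ(w) < μ_i, μ_{i+1} < μ(x) < μ_i, and the convergence-factor identity holds: [(μ_i − μ(w))/(μ(w) − μ_{i+1})] · [(μ(x) − μ_{i+1})/(μ_i − μ(x))] = ( μ_{i+1}(μ_i + α) / (μ_i(μ_{i+1} + α)) )². -/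
open scoped ComplexOrder

noncomputable section

lemma mulVecE_smul {n : ℕ} (M : Matrix (Fin n) (Fin n) ℂ) (a : ℂ)
    (u : EuclideanSpace ℂ (Fin n)) : mulVecE M (a • u) = a • mulVecE M u := by
  simp [mulVecE, Matrix.mulVec_smul]

lemma mulVecE_add {n : ℕ} (M : Matrix (Fin n) (Fin n) ℂ)
    (u v : EuclideanSpace ℂ (Fin n)) : mulVecE M (u + v) = mulVecE M u + mulVecE M v := by
  simp [mulVecE, Matrix.mulVec_add]

lemma mulVecE_matAdd {n : ℕ} (M N : Matrix (Fin n) (Fin n) ℂ)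
    (u : EuclideanSpace ℂ (Fin n)) : mulVecE (M + N) u = mulVecE M u + mulVecE N u := by
  simp [mulVecE, Matrix.add_mulVec]

lemma mulVecE_smulOne {n : ℕ} (c : ℂ) (u : EuclideanSpace ℂ (Fin n)) :
    mulVecE (c • (1 : Matrix (Fin n) (Fin n) ℂ)) u = c • u := by
  simp [mulVecE, Matrix.smul_mulVec, Matrix.one_mulVec]

lemma mulVecE_inv_cancel {n : ℕ} (A : Matrix (Fin n) (Fin n) ℂ) (hA : IsUnit A)
    (v : EuclideanSpace ℂ (Fin n)) : mulVecE A⁻¹ (mulVecE A v) = v := by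
  simp [mulVecE, Matrix.mulVec_mulVec, Matrix.nonsing_inv_mul A
    ((Matrix.isUnit_iff_isUnit_det A).mp hA), Matrix.one_mulVec]

lemma normSq_re {a : ℂ} : ((starRingEnd ℂ) a * a).re = ‖a‖ ^ 2 := by
  rw [Complex.sq_norm, Complex.normSq_apply]
  simp [Complex.mul_re]

lemma normSq_im {a : ℂ} : ((starRingEnd ℂ) a * a).im = 0 := by
  simp [Complex.mul_im]; ring

lemma RQ_combo {n : ℕ} (B : Matrix (Fin n) (Fin n) ℂ)
    (xi xi1 : EuclideanSpace ℂ (Fin n))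
    (hxi : ‖xi‖ = 1) (hxi1 : ‖xi1‖ = 1) (horth : (inner ℂ xi xi1 : ℂ) = 0)
    (μi μi1 : ℝ)
    (heigi : mulVecE B xi = ((μi : ℝ) : ℂ) • xi)
    (heigi1 : mulVecE B xi1 = ((μi1 : ℝ) : ℂ) • xi1)
    (a b : ℂ) :
    RQ B (a • xi + b • xi1) = (μi * ‖a‖ ^ 2 + μi1 * ‖b‖ ^ 2) / (‖a‖ ^ 2 + ‖b‖ ^ 2) := by
  have horth' : (inner ℂ xi1 xi : ℂ) = 0 := by
    rw [← inner_conj_symm, horth, map_zero]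
  have hii : (inner ℂ xi xi : ℂ) = 1 := by
    rw [inner_self_eq_norm_sq_to_K, hxi]; norm_num
  have hii1 : (inner ℂ xi1 xi1 : ℂ) = 1 := by
    rw [inner_self_eq_norm_sq_to_K, hxi1]; norm_num
  have key : ∀ c d : ℂ, (inner ℂ (a • xi + b • xi1) (c • xi + d • xi1) : ℂ)
      = (starRingEnd ℂ) a * c + (starRingEnd ℂ) b * d := by
    intro c d
    simp only [inner_add_left, inner_add_right, inner_smul_left, inner_smul_right,
      horth, horth', hii, hii1, mul_zero, mul_one, add_zero, zero_add]
    ring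
  have hnum : (inner ℂ (a • xi + b • xi1) (mulVecE B (a • xi + b • xi1)) : ℂ)
      = (starRingEnd ℂ) a * a * μi + (starRingEnd ℂ) b * b * μi1 := by
    rw [mulVecE_add, mulVecE_smul, mulVecE_smul, heigi, heigi1, smul_smul, smul_smul, key]
    ring
  have hden : (‖a • xi + b • xi1‖ : ℝ) ^ 2 = ‖a‖ ^ 2 + ‖b‖ ^ 2 := by
    rw [norm_sq_eq_re_inner (𝕜 := ℂ) (a • xi + b • xi1), key a b]
    simp [RCLike.re_to_complex, Complex.add_re, normSq_re, Complex.sq_norm,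
      Complex.normSq_apply]
  rw [RQ, hnum, hden]
  congr 1
  simp [Complex.add_re, Complex.mul_re, normSq_im, Complex.sq_norm, Complex.normSq_apply]
  ring

lemma mean_bounds (μi μi1 T S : ℝ) (h : μi1 < μi) (hT : 0 < T) (hS : 0 < S) :
    μi1 < (μi*T+μi1*S)/(T+S) ∧ (μi*T+μi1*S)/(T+S) < μi ∧
    μi - (μi*T+μi1*S)/(T+S) = (μi-μi1)*S/(T+S) ∧
    (μi*T+μi1*S)/(T+S) - μi1 = (μi-μi1)*T/(T+S) := by
  have hTS : (0:ℝ) < T + S := by linarith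
  have e1 : μi - (μi*T+μi1*S)/(T+S) = (μi-μi1)*S/(T+S) := by
    field_simp; ring
  have e2 : (μi*T+μi1*S)/(T+S) - μi1 = (μi-μi1)*T/(T+S) := by
    field_simp; ring
  have hd : (0:ℝ) < μi - μi1 := by linarith
  have p1 : (0:ℝ) < (μi-μi1)*S/(T+S) := by positivity
  have p2 : (0:ℝ) < (μi-μi1)*T/(T+S) := by positivity
  exact ⟨by linarith, by linarith, e1, e2⟩

lemma ratio_lemma (μi μi1 α T S T' S' : ℝ) (h : μi1 < μi) (h1 : 0 < μi1)
    (hα : 0 < α) (hT : 0 < T) (hS : 0 < S)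
    (hT' : T' = (μi / (μi + α))^2 * T) (hS' : S' = (μi1 / (μi1 + α))^2 * S) :
    μi1 < (μi*T'+μi1*S')/(T'+S') ∧ (μi*T'+μi1*S')/(T'+S') < μi ∧
    μi1 < (μi*T+μi1*S)/(T+S) ∧ (μi*T+μi1*S)/(T+S) < μi ∧
      ((μi - (μi*T'+μi1*S')/(T'+S')) / ((μi*T'+μi1*S')/(T'+S') - μi1)) *
        (((μi*T+μi1*S)/(T+S) - μi1) / (μi - (μi*T+μi1*S)/(T+S))) =
        (μi1 * (μi + α) / (μi * (μi1 + α))) ^ 2 := by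
  have hμi : (0:ℝ) < μi := lt_trans h1 h
  have hμα : (0:ℝ) < μi + α := by linarith
  have hμ1α : (0:ℝ) < μi1 + α := by linarith
  have hTp : (0:ℝ) < T' := by rw [hT']; positivity
  have hSp : (0:ℝ) < S' := by rw [hS']; positivity
  obtain ⟨b1, b2, e1, e2⟩ := mean_bounds μi μi1 T' S' h hTp hSp
  obtain ⟨c1, c2, f1, f2⟩ := mean_bounds μi μi1 T S h hT hS
  refine ⟨b1, b2, c1, c2, ?_⟩
  rw [e1, e2, f1, f2, hT', hS']
  have hd : μi - μi1 ≠ 0 := by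
    have : (0:ℝ) < μi - μi1 := by linarith
    linarith
  have hTS : T + S ≠ 0 := by positivity
  have hTS' : T' + S' ≠ 0 := by positivity
  field_simp

/-- The convergence-factor identity for `w = (B + αI)⁻¹ B x` with
`x = c_i x_i + c_{i+1} x_{i+1}` and `α > 0`. -/
theorem convergence_factor_identity
    {n : ℕ} (B : Matrix (Fin n) (Fin n) ℂ) (hB : B.PosDef)
    (xi xi1 : EuclideanSpace ℂ (Fin n))
    (hxi : ‖xi‖ = 1) (hxi1 : ‖xi1‖ = 1) (horth : (inner ℂ xi xi1 : ℂ) = 0)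
    (μi μi1 : ℝ) (hμ : μi1 < μi) (hμpos : 0 < μi1)
    (heigi : mulVecE B xi = ((μi : ℝ) : ℂ) • xi)
    (heigi1 : mulVecE B xi1 = ((μi1 : ℝ) : ℂ) • xi1)
    (ci ci1 : ℂ) (hci : ci ≠ 0) (hci1 : ci1 ≠ 0)
    (x : EuclideanSpace ℂ (Fin n)) (hx : x = ci • xi + ci1 • xi1)
    (α : ℝ) (hα : 0 < α)
    (w : EuclideanSpace ℂ (Fin n))
    (hw : w = mulVecE (B + ((α : ℝ) : ℂ) • (1 : Matrix (Fin n) (Fin n) ℂ))⁻¹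
      (mulVecE B x)) :
    μi1 < RQ B w ∧ RQ B w < μi ∧ μi1 < RQ B x ∧ RQ B x < μi ∧
      ((μi - RQ B w) / (RQ B w - μi1)) * ((RQ B x - μi1) / (μi - RQ B x)) =
        (μi1 * (μi + α) / (μi * (μi1 + α))) ^ 2 := by
  have hμi : (0:ℝ) < μi := lt_trans hμpos hμ
  have hμα : (0:ℝ) < μi + α := by linarith
  have hμ1α : (0:ℝ) < μi1 + α := by linarith
  set A := B + ((α : ℝ) : ℂ) • (1 : Matrix (Fin n) (Fin n) ℂ) with hA
  -- A is positive definite, hence invertible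
  have hApd : A.PosDef := by
    refine hB.add_posSemidef (Matrix.posSemidef_iff_dotProduct_mulVec.mpr ⟨?_, ?_⟩)
    · unfold Matrix.IsHermitian
      rw [Matrix.conjTranspose_smul]
      simp [Complex.conj_ofReal]
    · intro y
      simp only [Matrix.smul_mulVec, Matrix.one_mulVec, dotProduct_smul]
      have h0 : (0:ℂ) ≤ dotProduct (star y) y := dotProduct_star_self_nonneg y
      have hα' : (0:ℂ) ≤ ((α:ℝ):ℂ) := by
        rw [Complex.zero_le_real]; exact hα.le
      calc (0:ℂ) ≤ ((α:ℝ):ℂ) * dotProduct (star y) y := mul_nonneg hα' h0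
      _ = ((α:ℝ):ℂ) • dotProduct (star y) y := by rw [smul_eq_mul]
  have hAunit : IsUnit A := hApd.isUnit
  -- action of A on the eigenvectors
  have hAxi : mulVecE A xi = (((μi + α : ℝ)) : ℂ) • xi := by
    rw [hA, mulVecE_matAdd, heigi, mulVecE_smulOne, ← add_smul]
    push_cast; ring_nf
  have hAxi1 : mulVecE A xi1 = (((μi1 + α : ℝ)) : ℂ) • xi1 := by
    rw [hA, mulVecE_matAdd, heigi1, mulVecE_smulOne, ← add_smul]
    push_cast; ring_nf
  -- action of A⁻¹ on the eigenvectors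
  have hinv : ∀ (v : EuclideanSpace ℂ (Fin n)) (μ : ℝ), 0 < μ + α →
      mulVecE A v = (((μ + α : ℝ)) : ℂ) • v →
      mulVecE A⁻¹ v = ((((μ + α : ℝ)) : ℂ))⁻¹ • v := by
    intro v μ hpos hv
    have hne : (((μ + α : ℝ)) : ℂ) ≠ 0 := by
      exact_mod_cast Complex.ofReal_ne_zero.mpr hpos.ne'
    have h1 : mulVecE A⁻¹ (mulVecE A v) = v := mulVecE_inv_cancel A hAunit v
    rw [hv, mulVecE_smul] at h1
    calc mulVecE A⁻¹ v
        = ((((μ + α : ℝ)) : ℂ))⁻¹ • ((((μ + α : ℝ)) : ℂ) • mulVecE A⁻¹ v) := by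
          rw [smul_smul, inv_mul_cancel₀ hne, one_smul]
      _ = ((((μ + α : ℝ)) : ℂ))⁻¹ • v := by rw [h1]
  have hinvi := hinv xi μi (by linarith) hAxi
  have hinvi1 := hinv xi1 μi1 (by linarith) hAxi1
  -- explicit form of w
  have hBx : mulVecE B x = (ci * μi) • xi + (ci1 * μi1) • xi1 := by
    rw [hx, mulVecE_add, mulVecE_smul, mulVecE_smul, heigi, heigi1, smul_smul, smul_smul]
  have hwx : w = (ci * μi * ((((μi + α : ℝ)) : ℂ))⁻¹) • xi
      + (ci1 * μi1 * ((((μi1 + α : ℝ)) : ℂ))⁻¹) • xi1 := by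
    rw [hw, hBx, mulVecE_add, mulVecE_smul, mulVecE_smul, hinvi, hinvi1,
      smul_smul, smul_smul]
  -- Rayleigh quotients
  have hRQx : RQ B x = (μi * ‖ci‖ ^ 2 + μi1 * ‖ci1‖ ^ 2) / (‖ci‖ ^ 2 + ‖ci1‖ ^ 2) := by
    rw [hx]; exact RQ_combo B xi xi1 hxi hxi1 horth μi μi1 heigi heigi1 ci ci1
  have hRQw : RQ B w = (μi * ‖ci * μi * ((((μi + α : ℝ)) : ℂ))⁻¹‖ ^ 2
        + μi1 * ‖ci1 * μi1 * ((((μi1 + α : ℝ)) : ℂ))⁻¹‖ ^ 2)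
      / (‖ci * μi * ((((μi + α : ℝ)) : ℂ))⁻¹‖ ^ 2
        + ‖ci1 * μi1 * ((((μi1 + α : ℝ)) : ℂ))⁻¹‖ ^ 2) := by
    rw [hwx]; exact RQ_combo B xi xi1 hxi hxi1 horth μi μi1 heigi heigi1 _ _
  -- norms of the coefficients of w
  have hnormw_i : ‖ci * μi * ((((μi + α : ℝ)) : ℂ))⁻¹‖ ^ 2
      = (μi / (μi + α))^2 * ‖ci‖ ^ 2 := by
    rw [norm_mul, norm_mul, norm_inv, Complex.norm_real, Complex.norm_real,
      Real.norm_eq_abs, Real.norm_eq_abs, abs_of_pos hμi, abs_of_pos hμα]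
    field_simp
  have hnormw_i1 : ‖ci1 * μi1 * ((((μi1 + α : ℝ)) : ℂ))⁻¹‖ ^ 2
      = (μi1 / (μi1 + α))^2 * ‖ci1‖ ^ 2 := by
    rw [norm_mul, norm_mul, norm_inv, Complex.norm_real, Complex.norm_real,
      Real.norm_eq_abs, Real.norm_eq_abs, abs_of_pos hμpos, abs_of_pos hμ1α]
    field_simp
  have hT : (0:ℝ) < ‖ci‖ ^ 2 := by
    have := norm_pos_iff.mpr hci
    positivity
  have hS : (0:ℝ) < ‖ci1‖ ^ 2 := by
    have := norm_pos_iff.mpr hci1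
    positivity
  obtain ⟨r1, r2, r3, r4, r5⟩ := ratio_lemma μi μi1 α (‖ci‖ ^ 2) (‖ci1‖ ^ 2)
    (‖ci * μi * ((((μi + α : ℝ)) : ℂ))⁻¹‖ ^ 2)
    (‖ci1 * μi1 * ((((μi1 + α : ℝ)) : ℂ))⁻¹‖ ^ 2)
    hμ hμpos hα hT hS hnormw_i hnormw_i1
  rw [hRQx, hRQw]
  exact ⟨r1, r2, r3, r4, r5⟩
end
end

section
/- Let 0 < μ_{i+1} < μ_i be real numbers and γ ∈ (0,1). For κ ∈ (μ_{i+1}, μ_i), consider the quadratic equation a(κ)α² + b(κ)α + c = 0 where a(κ) = γ²(κ(μ_i + μ_{i+1}) − μ_i μ_{i+1}), b(κ) = 2γ²κ μ_i μ_{i+1}, and c = −(1 − γ²)μ_i² μ_{i+1}². Then a(κ) > 0, b(κ) > 0, c < 0, the quadratic has exactly one positive root α(κ) and one negative root, the function κ ↦ α(κ) is strictly decreasing on (μ_{i+1}, μ_i), and α(κ) → μ_{i+1}(1 − γ)/γ as κ → μ_i from below. -/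
lemma quad_aux (a b c : ℝ) (ha : 0 < a) (hb : 0 < b) (hc : c < 0) :
    0 < (-b + Real.sqrt (b^2 - 4*a*c)) / (2*a) ∧
    a * ((-b + Real.sqrt (b^2 - 4*a*c)) / (2*a))^2
      + b * ((-b + Real.sqrt (b^2 - 4*a*c)) / (2*a)) + c = 0 ∧
    (-b - Real.sqrt (b^2 - 4*a*c)) / (2*a) < 0 ∧
    a * ((-b - Real.sqrt (b^2 - 4*a*c)) / (2*a))^2
      + b * ((-b - Real.sqrt (b^2 - 4*a*c)) / (2*a)) + c = 0 ∧
    ∀ β : ℝ, a*β^2 + b*β + c = 0 →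
      β = (-b + Real.sqrt (b^2 - 4*a*c)) / (2*a) ∨
      β = (-b - Real.sqrt (b^2 - 4*a*c)) / (2*a) := by
  set s := Real.sqrt (b^2 - 4*a*c) with hs
  have hD : 0 < b^2 - 4*a*c := by nlinarith
  have hs0 : 0 ≤ s := Real.sqrt_nonneg _
  have hs2 : s^2 = b^2 - 4*a*c := Real.sq_sqrt hD.le
  have hsb : b < s := by nlinarith
  have ha' : (2*a) ≠ 0 := by positivity
  refine ⟨div_pos (by linarith) (by positivity), ?_, ?_, ?_, ?_⟩
  · field_simp
    nlinarith [hs2]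
  · apply div_neg_of_neg_of_pos <;> nlinarith
  · field_simp
    nlinarith [hs2]
  · intro β hβ
    have key : a * (β - (-b + s)/(2*a)) * (β - (-b - s)/(2*a)) = 0 := by
      field_simp
      linear_combination (4*a)*hβ - hs2
    rcases mul_eq_zero.mp key with h | h
    · rcases mul_eq_zero.mp h with h | h
      · exact absurd h ha.ne'
      · left; linarith [sub_eq_zero.mp h]
    · right; linarith [sub_eq_zero.mp h]


/-- For `κ ∈ (μ_{i+1}, μ_i)`, the quadratic `a(κ)α² + b(κ)α + c = 0` with
`a(κ) = γ²(κ(μ_i + μ_{i+1}) - μ_i μ_{i+1})`, `b(κ) = 2γ²κμ_iμ_{i+1}`,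
`c = -(1-γ²)μ_i²μ_{i+1}²` has positive leading and linear coefficients and negative
constant term, exactly one positive and one negative root; its positive root `α(κ)` is
strictly decreasing in `κ` and tends to `μ_{i+1}(1-γ)/γ` as `κ → μ_i` from below. -/
theorem positive_root_of_quadratic
    (μi μi1 γ : ℝ) (h0 : 0 < μi1) (h1 : μi1 < μi) (hγ0 : 0 < γ) (hγ1 : γ < 1) :
    ∃ αf : ℝ → ℝ,
      (∀ κ ∈ Set.Ioo μi1 μi,
        0 < γ ^ 2 * (κ * (μi + μi1) - μi * μi1) ∧
        0 < 2 * γ ^ 2 * κ * μi * μi1 ∧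
        (-(1 - γ ^ 2) * μi ^ 2 * μi1 ^ 2 : ℝ) < 0 ∧
        0 < αf κ ∧
        γ ^ 2 * (κ * (μi + μi1) - μi * μi1) * (αf κ) ^ 2 +
          2 * γ ^ 2 * κ * μi * μi1 * αf κ + (-(1 - γ ^ 2) * μi ^ 2 * μi1 ^ 2) = 0 ∧
        ∃ αneg : ℝ, αneg < 0 ∧
          γ ^ 2 * (κ * (μi + μi1) - μi * μi1) * αneg ^ 2 +
            2 * γ ^ 2 * κ * μi * μi1 * αneg + (-(1 - γ ^ 2) * μi ^ 2 * μi1 ^ 2) = 0 ∧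
          ∀ β : ℝ,
            γ ^ 2 * (κ * (μi + μi1) - μi * μi1) * β ^ 2 +
              2 * γ ^ 2 * κ * μi * μi1 * β + (-(1 - γ ^ 2) * μi ^ 2 * μi1 ^ 2) = 0 →
            β = αf κ ∨ β = αneg) ∧
      StrictAntiOn αf (Set.Ioo μi1 μi) ∧
      Filter.Tendsto αf (nhdsWithin μi (Set.Ioo μi1 μi))
        (nhds (μi1 * (1 - γ) / γ)) := by
  set A : ℝ → ℝ := fun κ => γ ^ 2 * (κ * (μi + μi1) - μi * μi1) with hAdef
  set B : ℝ → ℝ := fun κ => 2 * γ ^ 2 * κ * μi * μi1 with hBdef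
  set c : ℝ := -(1 - γ ^ 2) * μi ^ 2 * μi1 ^ 2 with hcdef
  have hγ2 : 0 < γ ^ 2 := by positivity
  have hγlt : γ ^ 2 < 1 := by nlinarith
  have hc : c < 0 := by
    simp only [hcdef]
    nlinarith [mul_pos (mul_pos (sub_pos.mpr hγlt) (pow_pos (h0.trans h1) 2)) (pow_pos h0 2)]
  have hA : ∀ κ, μi1 < κ → 0 < A κ := by
    intro κ hκ
    simp only [hAdef]
    have hS : (0:ℝ) < μi + μi1 := by linarith
    nlinarith [mul_lt_mul_of_pos_right hκ hS, mul_pos h0 h0]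
  have hB : ∀ κ, μi1 < κ → 0 < B κ := by
    intro κ hκ
    simp only [hBdef]
    exact mul_pos (mul_pos (mul_pos (mul_pos two_pos hγ2) (h0.trans hκ)) (h0.trans h1)) h0
  set αf : ℝ → ℝ := fun κ =>
    (-B κ + Real.sqrt ((B κ)^2 - 4 * A κ * c)) / (2 * A κ) with hαf
  refine ⟨αf, ?_, ?_, ?_⟩
  · intro κ hκ
    obtain ⟨hpos, hroot, hneg, hrootn, huniq⟩ :=
      quad_aux (A κ) (B κ) c (hA κ hκ.1) (hB κ hκ.1) hc
    exact ⟨hA κ hκ.1, hB κ hκ.1, hc, hpos, hroot,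
      (-B κ - Real.sqrt ((B κ)^2 - 4 * A κ * c)) / (2 * A κ), hneg, hrootn, huniq⟩
  · intro x hx y hy hxy
    obtain ⟨hx1, hx2⟩ := hx
    obtain ⟨hy1, hy2⟩ := hy
    have hposx : 0 < αf x := (quad_aux _ _ _ (hA x hx1) (hB x hx1) hc).1
    have hrootx : A x * (αf x)^2 + B x * (αf x) + c = 0 :=
      (quad_aux _ _ _ (hA x hx1) (hB x hx1) hc).2.1
    have hposy : 0 < αf y := (quad_aux _ _ _ (hA y hy1) (hB y hy1) hc).1
    have hrooty : A y * (αf y)^2 + B y * (αf y) + c = 0 :=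
      (quad_aux _ _ _ (hA y hy1) (hB y hy1) hc).2.1
    have hAlt : A x < A y := by
      simp only [hAdef]
      have hS : (0:ℝ) < μi + μi1 := by linarith
      nlinarith [mul_lt_mul_of_pos_right hxy hS]
    have hBlt : B x < B y := by
      simp only [hBdef]
      exact mul_lt_mul_of_pos_right (mul_lt_mul_of_pos_right
        (mul_lt_mul_of_pos_left hxy (by positivity)) (h0.trans h1)) h0
    have hAy := hA y hy1
    have hBy := hB y hy1
    obtain ⟨p, hp⟩ : ∃ p, αf x = p := ⟨_, rfl⟩
    obtain ⟨q, hq⟩ : ∃ q, αf y = q := ⟨_, rfl⟩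
    rw [hp] at hposx hrootx
    rw [hq] at hposy hrooty
    rw [hp, hq]
    clear_value αf A B c
    by_contra h
    push_neg at h
    have hFy : 0 < A y * p ^ 2 + B y * p + c := by
      have t1 := mul_pos (sub_pos.mpr hAlt) (pow_pos hposx 2)
      have t2 := mul_pos (sub_pos.mpr hBlt) hposx
      nlinarith [hrootx]
    have t3 : 0 ≤ (q - p) * (A y * (q + p) + B y) := by
      apply mul_nonneg (by linarith)
      nlinarith [mul_pos hAy (by linarith : (0:ℝ) < q + p)]
    nlinarith [t3, hFy, hrooty]
  · have hAμ : 0 < A μi := hA μi h1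
    have hcont : ContinuousAt αf μi := by
      have h2A : (2 : ℝ) * A μi ≠ 0 := by positivity
      simp only [hαf, hAdef, hBdef]
      apply ContinuousAt.div _ (by fun_prop) (by simpa [hAdef] using h2A)
      fun_prop
    have hval : αf μi = μi1 * (1 - γ) / γ := by
      have hsq : (B μi)^2 - 4 * A μi * c = (2 * γ * μi^2 * μi1)^2 := by
        simp only [hAdef, hBdef, hcdef]; ring
      have hsqrt : Real.sqrt ((B μi)^2 - 4 * A μi * c) = 2 * γ * μi^2 * μi1 := by
        rw [hsq, Real.sqrt_sq (by positivity)]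
      simp only [hαf]
      rw [hsqrt, div_eq_div_iff (by positivity) (by positivity)]
      simp only [hAdef, hBdef]
      ring
    rw [← hval]
    exact hcont.continuousWithinAt
end
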